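/- Let p be a non-crossing partition of [n], let B and B′ be adjacent blocks with d_p(B) < d_p(B′), and let p′ = p_{B,B′} be the non-crossing partition obtained by merging B and B′. Then d_{p′}(B∪B′) = d_p(B), and every block B″ of p other than B and B′ with d_p(B″) < d_p(B) satisfies d_{p′}(B″) ≤ d_p(B″). -/

import Mathlib

namespace NCPaper

/-- The index set `[n] = {1, …, n}` inside `ℕ`. -/
def Idx (n : ℕ) : Set ℕ := Set.Icc 1 n

/-- `r` is (the equivalence relation of) a partition of the set `S`:
a symmetric, transitive relation on `ℕ` whose domain is exactly `S`.
For `S ⊆ [n]` this encodes a partial partition of `[n]` with support `S`;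
its blocks are the equivalence classes. -/
def IsPartitionOn (S : Set ℕ) (r : ℕ → ℕ → Prop) : Prop :=
  (∀ i j, r i j → r j i) ∧ (∀ i j k, r i j → r j k → r i k) ∧ (∀ i, r i i ↔ i ∈ S)

/-- A partition (relation) is non-crossing if there are no `i < j < k < l`
with `i ∼ k`, `j ∼ l` and `i ≁ j`. -/
def NonCrossing (r : ℕ → ℕ → Prop) : Prop :=
  ∀ i j k l, i < j → j < k → k < l → r i k → r j l → r i j

/-- Refinement order on partitions encoded as relations:
`r ≤ s` iff every block of `r` is contained in a block of `s`. -/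
def RelLE (r s : ℕ → ℕ → Prop) : Prop := ∀ i j, r i j → s i j

/-- Join of two partial partitions with complementary (disjoint) supports:
the partition whose blocks are the blocks of `r` together with those of `s`. -/
def relJoin (r s : ℕ → ℕ → Prop) : ℕ → ℕ → Prop := fun i j => r i j ∨ s i j

/-- `k` lies (weakly) between `i` and `j`, i.e. `k ∈ {min i j, …, max i j}`. -/
def Between (i j k : ℕ) : Prop := min i j ≤ k ∧ k ≤ max i j

/-- The Kreweras complement `kr(r, S)` of the partial partition `(r, S)` of `[n]`:
the relation with support `[n] \ S` in which `i ∼ j` iff no element `k` of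
`{i,…,j} ∩ S` is `r`-equivalent to an element `l` of `S \ {i,…,j}`. -/
def krRel (n : ℕ) (S : Set ℕ) (r : ℕ → ℕ → Prop) : ℕ → ℕ → Prop :=
  fun i j => i ∈ Idx n ∧ j ∈ Idx n ∧ i ∉ S ∧ j ∉ S ∧
    ∀ k l, k ∈ S → l ∈ S → Between i j k → ¬ Between i j l → ¬ r k l

/-- Transport of a relation along a map. -/
def mapRel (f : ℕ → ℕ) (r : ℕ → ℕ → Prop) : ℕ → ℕ → Prop :=
  fun a b => ∃ i j, f i = a ∧ f j = b ∧ r i j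

/-- `i ↦ 2i - δ(i)` where `δ(i) = 1` for odd `i` and `δ(i) = 0` for even `i`;
this maps `[2k]` onto `S = {1,4,5,8,…,4k-3,4k} ⊆ [4k]`. -/
def fS (i : ℕ) : ℕ := 2 * i - i % 2

/-- `i ↦ 2i - (1 - δ(i))`; this maps `[2k]` onto `Sᶜ = {2,3,6,7,…} ⊆ [4k]`. -/
def fSc (i : ℕ) : ℕ := 2 * i - (1 - i % 2)

/-- The nested Kreweras complement `kr′(π)` of a partition `π` of `[2k]`:
transport `π` along `fS` to a partial partition of `[4k]` with support
`fS '' [2k]`, take its Kreweras complement and transport back along `fSc`. -/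
def krNested (k : ℕ) (r : ℕ → ℕ → Prop) : ℕ → ℕ → Prop :=
  fun i j => krRel (4 * k) (fS '' Idx (2 * k)) (mapRel fS r) (fSc i) (fSc j)

/-- `π₀`: the partition of `[2k]` with blocks `{2i, 2i+1}`, indices mod `2k`
(so one block is `{2k, 1}`). -/
def piZero (k : ℕ) : ℕ → ℕ → Prop := fun i j =>
  i ∈ Idx (2 * k) ∧ j ∈ Idx (2 * k) ∧
    (i = j ∨ (Even i ∧ j = i + 1) ∨ (Even j ∧ i = j + 1) ∨
      (i = 1 ∧ j = 2 * k) ∨ (j = 1 ∧ i = 2 * k))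

/-- `π₁`: the partition of `[2k]` with blocks `{2i-1, 2i}`, `1 ≤ i ≤ k`. -/
def piOne (k : ℕ) : ℕ → ℕ → Prop := fun i j =>
  i ∈ Idx (2 * k) ∧ j ∈ Idx (2 * k) ∧
    (i = j ∨ (Odd i ∧ j = i + 1) ∨ (Odd j ∧ i = j + 1))

/-- The `i`-th odd position `2i - 1` in `[2n]`. -/
def oddPos (i : ℕ) : ℕ := 2 * i - 1

/-- The `i`-th even position `2i` in `[2n]`. -/
def evenPos (i : ℕ) : ℕ := 2 * i

/-- The Kreweras complement `K(p)` of a partition `p` of `[n]`: transport `p`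
along `i ↦ 2i-1` to the odd positions `σ = {1,3,…,2n-1}` of `[2n]`, take the
Kreweras complement there, and transport back along `i ↦ 2i`. -/
def Kmap (n : ℕ) (r : ℕ → ℕ → Prop) : ℕ → ℕ → Prop :=
  fun i j => krRel (2 * n) (oddPos '' Idx n) (mapRel oddPos r) (evenPos i) (evenPos j)

/-- `p° = (p̂,σ) ∨ (K̂(p),σᶜ)`: the partition of `[2n]` obtained by placing `p`
on the odd positions and `K(p)` on the even positions. -/
def pCirc (n : ℕ) (p : ℕ → ℕ → Prop) : ℕ → ℕ → Prop :=
  relJoin (mapRel oddPos p) (mapRel evenPos (Kmap n p))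

/-- `F(π)` for `π ≥ π₀`: `i ∼ j` iff `2i-1 ∼_π 2j-1`. -/
def Fmap (r : ℕ → ℕ → Prop) : ℕ → ℕ → Prop := fun i j => r (2 * i - 1) (2 * j - 1)

/-- `G(π)` for `π ≥ π₁`: `i ∼ j` iff `2i ∼_π 2j`. -/
def Gmap (r : ℕ → ℕ → Prop) : ℕ → ℕ → Prop := fun i j => r (2 * i) (2 * j)

/-- `B` is a block of the partition (relation) `r`. -/
def IsBlock (r : ℕ → ℕ → Prop) (B : Set ℕ) : Prop := ∃ i, r i i ∧ B = {j | r i j}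

/-- The number `|r|` of blocks of the partition `r`. -/
noncomputable def numBlocks (r : ℕ → ℕ → Prop) : ℕ := {B : Set ℕ | IsBlock r B}.ncard

/-- `B' ⪯ B` for `B = {i₁<…<i_t}`, `B' = {j₁<…<j_{t'}}`: `i₁ < j₁` and `j_{t'} < i_t`. -/
def Nested (B' B : Set ℕ) : Prop := sInf B < sInf B' ∧ sSup B' < sSup B

/-- The depth `d_p(B)` of a block `B`: the maximal number `m` of blocks in a
chain `B = X₁ ⪯ X₂ ⪯ … ⪯ X_m` of blocks of `p`. -/
noncomputable def depth (p : ℕ → ℕ → Prop) (B : Set ℕ) : ℕ :=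
  sSup {m : ℕ | ∃ c : ℕ → Set ℕ, c 1 = B ∧
    (∀ i, 1 ≤ i → i ≤ m → IsBlock p (c i)) ∧
    (∀ i, 1 ≤ i → i < m → Nested (c i) (c (i + 1)))}

/-- `p_{B,B'}`: the partition obtained from `p` by merging the blocks `B` and `B'`. -/
def mergeRel (p : ℕ → ℕ → Prop) (B B' : Set ℕ) : ℕ → ℕ → Prop :=
  fun i j => p i j ∨ (p i i ∧ p j j ∧ i ∈ B ∪ B' ∧ j ∈ B ∪ B')

/-- Two distinct blocks `B, B'` of `p` are adjacent if replacing them by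
`B ∪ B'` yields a non-crossing partition. -/
def Adjacent (p : ℕ → ℕ → Prop) (B B' : Set ℕ) : Prop :=
  IsBlock p B ∧ IsBlock p B' ∧ B ≠ B' ∧ NonCrossing (mergeRel p B B')

/-- The set of the `i` smallest elements of `B`. -/
def lowerPart (B : Set ℕ) (i : ℕ) : Set ℕ := {x ∈ B | (B ∩ Set.Iic x).ncard ≤ i}

/-- The set of the remaining elements of `B` (all but the `i` smallest). -/
def upperPart (B : Set ℕ) (i : ℕ) : Set ℕ := {x ∈ B | i < (B ∩ Set.Iic x).ncard}

/-- `p_{B,i}`: the partition obtained from `p` by splitting the block `B` into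
the block of its `i` smallest elements and the block of its remaining elements. -/
def splitRel (p : ℕ → ℕ → Prop) (B : Set ℕ) (i : ℕ) : ℕ → ℕ → Prop :=
  fun x y => p x y ∧ ((x ∈ lowerPart B i ∧ y ∈ lowerPart B i) ∨
    (x ∈ upperPart B i ∧ y ∈ upperPart B i) ∨ (x ∉ B ∧ y ∉ B))

/-- The `i`-th smallest element of `B` (1-indexed). -/
noncomputable def nthSmall (B : Set ℕ) (i : ℕ) : ℕ :=
  sInf {x | x ∈ B ∧ (B ∩ Set.Iic x).ncard = i}

section Aux

variable {n : ℕ} {p : ℕ → ℕ → Prop}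

lemma block_nonempty {B : Set ℕ} (hB : IsBlock p B) : B.Nonempty := by
  obtain ⟨i, hi, rfl⟩ := hB; exact ⟨i, hi⟩

lemma block_subset_idx (hp : IsPartitionOn (Idx n) p) {B : Set ℕ} (hB : IsBlock p B) :
    B ⊆ Idx n := by
  obtain ⟨i, hi, rfl⟩ := hB
  intro j hj
  exact (hp.2.2 j).mp (hp.2.1 j i j (hp.1 i j hj) hj)

lemma block_bdd (hp : IsPartitionOn (Idx n) p) {B : Set ℕ} (hB : IsBlock p B) :
    BddAbove B :=
  ⟨n, fun x hx => (block_subset_idx hp hB hx).2⟩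

lemma block_rel (hp : IsPartitionOn (Idx n) p) {B : Set ℕ} (hB : IsBlock p B)
    {x y : ℕ} (hx : x ∈ B) (hy : y ∈ B) : p x y := by
  obtain ⟨i, hi, rfl⟩ := hB
  exact hp.2.1 _ _ _ (hp.1 _ _ hx) hy

lemma block_eq_class (hp : IsPartitionOn (Idx n) p) {B : Set ℕ} (hB : IsBlock p B)
    {x : ℕ} (hx : x ∈ B) : B = {j | p x j} := by
  obtain ⟨i, hi, rfl⟩ := hB
  ext j
  exact ⟨fun h => hp.2.1 _ _ _ (hp.1 _ _ hx) h, fun h => hp.2.1 _ _ _ hx h⟩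

lemma block_eq_of_rel (hp : IsPartitionOn (Idx n) p) {B C : Set ℕ}
    (hB : IsBlock p B) (hC : IsBlock p C) {x y : ℕ} (hx : x ∈ B) (hy : y ∈ C)
    (hxy : p x y) : B = C := by
  rw [block_eq_class hp hB hx, block_eq_class hp hC hy]
  ext z
  exact ⟨fun h => hp.2.1 _ _ _ (hp.1 _ _ hxy) h, fun h => hp.2.1 _ _ _ hxy h⟩

lemma rel_mem_block (hp : IsPartitionOn (Idx n) p) {B : Set ℕ} (hB : IsBlock p B)
    {x j : ℕ} (hx : x ∈ B) (h : p x j) : j ∈ B := by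
  rw [block_eq_class hp hB hx]; exact h

lemma block_disjoint (hp : IsPartitionOn (Idx n) p) {B C : Set ℕ}
    (hB : IsBlock p B) (hC : IsBlock p C) (hne : B ≠ C) {x : ℕ} (hx : x ∈ B) :
    x ∉ C := fun hxC =>
  hne (block_eq_of_rel hp hB hC hx hxC (block_rel hp hB hx hx))

lemma sInf_mem_block {B : Set ℕ} (hB : IsBlock p B) : sInf B ∈ B :=
  Nat.sInf_mem (block_nonempty hB)

lemma sSup_mem_block (hp : IsPartitionOn (Idx n) p) {B : Set ℕ} (hB : IsBlock p B) :
    sSup B ∈ B :=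
  Nat.sSup_mem (block_nonempty hB) (block_bdd hp hB)

lemma sInf_le_sSup_block (hp : IsPartitionOn (Idx n) p) {B : Set ℕ} (hB : IsBlock p B) :
    sInf B ≤ sSup B :=
  Nat.sInf_le (sSup_mem_block hp hB)

/-- Auxiliary step for the span trichotomy. -/
lemma span_tri_aux (hp : IsPartitionOn (Idx n) p) (hnc : NonCrossing p)
    {X Y : Set ℕ} (hX : IsBlock p X) (hY : IsBlock p Y) (hne : X ≠ Y)
    (h : sInf X < sInf Y) :
    sSup X < sInf Y ∨ (sInf X < sInf Y ∧ sSup Y < sSup X) := by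
  have haY : sInf Y ∈ Y := sInf_mem_block hY
  have hbX : sSup X ∈ X := sSup_mem_block hp hX
  have hbY : sSup Y ∈ Y := sSup_mem_block hp hY
  have haX : sInf X ∈ X := sInf_mem_block hX
  rcases lt_trichotomy (sSup Y) (sSup X) with h1 | h1 | h1
  · exact Or.inr ⟨h, h1⟩
  · exact absurd hbY (h1 ▸ block_disjoint hp hX hY hne hbX)
  · -- sSup X < sSup Y; show spans disjoint
    left
    rcases lt_trichotomy (sSup X) (sInf Y) with h2 | h2 | h2
    · exact h2
    · exact absurd (h2 ▸ haY) (block_disjoint hp hX hY hne hbX)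
    · -- crossing: sInf X < sInf Y < sSup X < sSup Y
      exfalso
      have hik : p (sInf X) (sSup X) := block_rel hp hX haX hbX
      have hjl : p (sInf Y) (sSup Y) := block_rel hp hY haY hbY
      have := hnc _ _ _ _ h h2 h1 hik hjl
      exact hne (block_eq_of_rel hp hX hY haX haY this)

/-- Span trichotomy for two distinct blocks of a non-crossing partition. -/
lemma span_trichotomy (hp : IsPartitionOn (Idx n) p) (hnc : NonCrossing p)
    {X Y : Set ℕ} (hX : IsBlock p X) (hY : IsBlock p Y) (hne : X ≠ Y) :
    sSup X < sInf Y ∨ sSup Y < sInf X ∨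
      (sInf X < sInf Y ∧ sSup Y < sSup X) ∨ (sInf Y < sInf X ∧ sSup X < sSup Y) := by
  rcases lt_trichotomy (sInf X) (sInf Y) with h | h | h
  · rcases span_tri_aux hp hnc hX hY hne h with h' | h'
    · exact Or.inl h'
    · exact Or.inr (Or.inr (Or.inl h'))
  · exact absurd (h ▸ sInf_mem_block hY)
      (block_disjoint hp hX hY hne (sInf_mem_block hX))
  · rcases span_tri_aux hp hnc hY hX (Ne.symm hne) h with h' | h'
    · exact Or.inr (Or.inl h')
    · exact Or.inr (Or.inr (Or.inr h'))

/-- The set of lengths of nested chains starting at `B`. -/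
def dSet (p : ℕ → ℕ → Prop) (B : Set ℕ) : Set ℕ :=
  {m : ℕ | ∃ c : ℕ → Set ℕ, c 1 = B ∧
    (∀ i, 1 ≤ i → i ≤ m → IsBlock p (c i)) ∧
    (∀ i, 1 ≤ i → i < m → Nested (c i) (c (i + 1)))}

lemma depth_eq_sSup_dSet (p : ℕ → ℕ → Prop) (B : Set ℕ) :
    depth p B = sSup (dSet p B) := rfl

lemma zero_mem_dSet (p : ℕ → ℕ → Prop) (B : Set ℕ) : 0 ∈ dSet p B :=
  ⟨fun _ => B, rfl, fun i h1 h2 => absurd h2 (by omega),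
    fun i h1 h2 => absurd h2 (by omega)⟩

lemma chain_sInf {m : ℕ} {c : ℕ → Set ℕ}
    (hc : ∀ i, 1 ≤ i → i < m → Nested (c i) (c (i + 1))) :
    ∀ i, 1 ≤ i → i ≤ m → sInf (c i) + i ≤ sInf (c 1) + 1 := by
  intro i
  induction i with
  | zero => intro h; omega
  | succ k ih =>
    intro _ h2
    rcases Nat.eq_zero_or_pos k with rfl | hk
    · norm_num
    · have hkm : k < m := by omega
      have hnest := hc k hk hkm
      have hdec : sInf (c (k + 1)) < sInf (c k) := hnest.1
      have := ih hk (by omega)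
      omega

lemma dSet_bddAbove (p : ℕ → ℕ → Prop) (B : Set ℕ) : BddAbove (dSet p B) := by
  refine ⟨sInf B + 1, ?_⟩
  rintro m ⟨c, hc1, _, hcn⟩
  rcases Nat.eq_zero_or_pos m with rfl | hm
  · exact Nat.zero_le _
  · have := chain_sInf hcn m hm le_rfl
    rw [hc1] at this
    simpa using (by omega : m ≤ sInf B + 1)

lemma depth_mem_dSet (p : ℕ → ℕ → Prop) (B : Set ℕ) : depth p B ∈ dSet p B := by
  rw [depth_eq_sSup_dSet]
  exact Nat.sSup_mem ⟨0, zero_mem_dSet p B⟩ (dSet_bddAbove p B)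

lemma le_depth {p : ℕ → ℕ → Prop} {B : Set ℕ} {m : ℕ} (hm : m ∈ dSet p B) :
    m ≤ depth p B :=
  le_csSup (dSet_bddAbove p B) hm

lemma depth_le_of_subset {p q : ℕ → ℕ → Prop} {B C : Set ℕ}
    (h : dSet p B ⊆ dSet q C) : depth p B ≤ depth q C :=
  le_depth (h (depth_mem_dSet p B))

/-- Key geometric fact: an adjacent block of strictly larger depth is nested
inside the span of the other. -/
lemma nested_key (hp : IsPartitionOn (Idx n) p) (hnc : NonCrossing p)
    {B B' : Set ℕ} (hadj : Adjacent p B B') (hd : depth p B < depth p B') :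
    sInf B < sInf B' ∧ sSup B' < sSup B := by
  obtain ⟨hB, hB', hne, hmnc⟩ := hadj
  have hBne := block_nonempty hB
  have hB'ne := block_nonempty hB'
  have haB : sInf B ∈ B := sInf_mem_block hB
  have hbB : sSup B ∈ B := sSup_mem_block hp hB
  have haB' : sInf B' ∈ B' := sInf_mem_block hB'
  have hbB' : sSup B' ∈ B' := sSup_mem_block hp hB'
  have hab : sInf B ≤ sSup B := sInf_le_sSup_block hp hB
  have hab' : sInf B' ≤ sSup B' := sInf_le_sSup_block hp hB'
  -- helper to produce a contradiction from `depth p B' ≤ depth p B`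
  have contra1 : ¬ depth p B' ≤ depth p B := by omega
  rcases span_trichotomy hp hnc hB hB' hne with hcase | hcase | hcase | hcase
  · -- disjoint, B left of B' : sSup B < sInf B'
    exfalso
    apply contra1
    obtain ⟨c, hc1, hcb, hcn⟩ := depth_mem_dSet p B'
    set m := depth p B' with hm
    rcases Nat.eq_zero_or_pos m with h0 | hm1
    · omega
    refine le_depth (⟨fun i => if i = 1 then B else c i, if_pos rfl, ?_, ?_⟩ :
      m ∈ dSet p B)
    · intro i h1 h2
      by_cases hi : i = 1
      · simpa [hi] using hB
      · simpa [hi] using hcb i h1 h2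
    · intro i h1 h2
      by_cases hi : i = 1
      · subst hi
        have h2' : (2:ℕ) ≤ m := h2
        have hX : IsBlock p (c 2) := hcb 2 (by omega) h2'
        have hnest : Nested (c 1) (c 2) := hcn 1 le_rfl h2
        rw [hc1] at hnest
        -- hnest : sInf B' < sInf (c 2) is wrong orientation; Nested B' (c 2)
        -- means sInf (c 2) < sInf B' ∧ sSup B' < sSup (c 2)
        obtain ⟨hn1, hn2⟩ := hnest
        have hXB' : c 2 ≠ B' := fun h => by rw [h] at hn1; omega
        have hXB : c 2 ≠ B := by
          intro h
          rw [h] at hn2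
          omega
        have hbX : sSup B < sSup (c 2) := by omega
        have haX : sInf (c 2) < sInf B := by
          by_contra hcon
          push_neg at hcon
          have hne' : sInf (c 2) ≠ sInf B := fun h =>
            block_disjoint hp hX hB hXB (sInf_mem_block hX) (h ▸ haB)
          have hlt : sInf B < sInf (c 2) := lt_of_le_of_ne hcon (Ne.symm hne')
          rcases span_trichotomy hp hnc hX hB hXB with h' | h' | h' | h'
          · -- sSup (c 2) < sInf B : impossible
            have : sInf (c 2) ≤ sSup (c 2) := sInf_le_sSup_block hp hX
            omega
          · -- sSup B < sInf (c 2) : crossing in merged partition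
            have hlt2 : sInf (c 2) < sInf B' := hn1
            have hik : mergeRel p B B' (sSup B) (sInf B') :=
              Or.inr ⟨block_rel hp hB hbB hbB, block_rel hp hB' haB' haB',
                Or.inl hbB, Or.inr haB'⟩
            have hjl : mergeRel p B B' (sInf (c 2)) (sSup (c 2)) :=
              Or.inl (block_rel hp hX (sInf_mem_block hX) (sSup_mem_block hp hX))
            have := hmnc _ _ _ _ h' hlt2 (by omega) hik hjl
            rcases this with hpij | ⟨_, _, _, hj⟩
            · exact hXB (block_eq_of_rel hp hB hX hbB (sInf_mem_block hX)
                hpij).symm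
            · rcases hj with hj | hj
              · exact block_disjoint hp hX hB hXB (sInf_mem_block hX) hj
              · exact block_disjoint hp hX hB' hXB' (sInf_mem_block hX) hj
          · omega
          · omega
        simp only [show (1:ℕ) + 1 = 2 from rfl, if_neg (by omega : (2:ℕ) ≠ 1)]
        exact ⟨haX, hbX⟩
      · have hi1 : i + 1 ≠ 1 := by omega
        simpa [hi, hi1, show i ≠ 0 by omega] using hcn i h1 h2
  · -- disjoint, B' left of B : sSup B' < sInf B
    exfalso
    apply contra1
    obtain ⟨c, hc1, hcb, hcn⟩ := depth_mem_dSet p B'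
    set m := depth p B' with hm
    rcases Nat.eq_zero_or_pos m with h0 | hm1
    · omega
    refine le_depth (⟨fun i => if i = 1 then B else c i, if_pos rfl, ?_, ?_⟩ :
      m ∈ dSet p B)
    · intro i h1 h2
      by_cases hi : i = 1
      · simpa [hi] using hB
      · simpa [hi] using hcb i h1 h2
    · intro i h1 h2
      by_cases hi : i = 1
      · subst hi
        have h2' : (2:ℕ) ≤ m := h2
        have hX : IsBlock p (c 2) := hcb 2 (by omega) h2'
        have hnest : Nested (c 1) (c 2) := hcn 1 le_rfl h2
        rw [hc1] at hnest
        obtain ⟨hn1, hn2⟩ := hnest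
        have hXB' : c 2 ≠ B' := fun h => by rw [h] at hn1; omega
        have hXB : c 2 ≠ B := by
          intro h
          rw [h] at hn1
          omega
        have haX : sInf (c 2) < sInf B := by omega
        have hbX : sSup B < sSup (c 2) := by
          by_contra hcon
          push_neg at hcon
          have hne' : sSup (c 2) ≠ sSup B := fun h =>
            block_disjoint hp hX hB hXB (sSup_mem_block hp hX) (h ▸ hbB)
          have hlt : sSup (c 2) < sSup B := lt_of_le_of_ne hcon hne'
          rcases span_trichotomy hp hnc hX hB hXB with h' | h' | h' | h'
          · -- sSup (c 2) < sInf B : crossing in merged partition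
            have hik : mergeRel p B B' (sInf (c 2)) (sSup (c 2)) :=
              Or.inl (block_rel hp hX (sInf_mem_block hX) (sSup_mem_block hp hX))
            have hjl : mergeRel p B B' (sSup B') (sInf B) :=
              Or.inr ⟨block_rel hp hB' hbB' hbB', block_rel hp hB haB haB,
                Or.inr hbB', Or.inl haB⟩
            have := hmnc _ _ _ _ (by omega) hn2 h' hik hjl
            rcases this with hpij | ⟨_, _, hj, _⟩
            · exact hXB' (block_eq_of_rel hp hX hB' (sInf_mem_block hX) hbB'
                hpij)
            · rcases hj with hj | hj
              · exact block_disjoint hp hX hB hXB (sInf_mem_block hX) hj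
              · exact block_disjoint hp hX hB' hXB' (sInf_mem_block hX) hj
          · -- sSup B < sInf (c 2) : impossible
            have : sInf (c 2) ≤ sSup (c 2) := sInf_le_sSup_block hp hX
            omega
          · omega
          · omega
        simp only [show (1:ℕ) + 1 = 2 from rfl, if_neg (by omega : (2:ℕ) ≠ 1)]
        exact ⟨haX, hbX⟩
      · have hi1 : i + 1 ≠ 1 := by omega
        simpa [hi, hi1, show i ≠ 0 by omega] using hcn i h1 h2
  · exact hcase
  · -- B nested in B' : depth p B ≥ depth p B' + 1, contradiction
    exfalso
    obtain ⟨c, hc1, hcb, hcn⟩ := depth_mem_dSet p B'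
    set m := depth p B' with hm
    have hmem : m + 1 ∈ dSet p B := by
      refine ⟨fun i => if i = 1 then B else c (i - 1), if_pos rfl, ?_, ?_⟩
      · intro i h1 h2
        by_cases hi : i = 1
        · simpa [hi] using hB
        · have : 1 ≤ i - 1 ∧ i - 1 ≤ m := by omega
          simpa [hi] using hcb (i - 1) this.1 this.2
      · intro i h1 h2
        by_cases hi : i = 1
        · subst hi
          have : (2:ℕ) - 1 = 1 := rfl
          simp only [show (1:ℕ) + 1 = 2 from rfl, if_neg (by omega : (2:ℕ) ≠ 1),
            this, hc1, if_pos rfl]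
          exact ⟨hcase.1, hcase.2⟩
        · have hi1 : i + 1 ≠ 1 := by omega
          have hstep := hcn (i - 1) (by omega) (by omega)
          have e1 : i - 1 + 1 = i := by omega
          rw [e1] at hstep
          simpa [hi, hi1, show i ≠ 0 by omega, show i + 1 - 1 = i from by omega] using hstep
    have := le_depth hmem
    omega

/-- Characterization of blocks of the merged partition. -/
lemma mergeRel_isBlock_iff (hp : IsPartitionOn (Idx n) p)
    {B B' : Set ℕ} (hB : IsBlock p B) (hB' : IsBlock p B') (hne : B ≠ B')
    {C : Set ℕ} :
    IsBlock (mergeRel p B B') C ↔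
      (C = B ∪ B' ∨ (IsBlock p C ∧ C ≠ B ∧ C ≠ B')) := by
  constructor
  · rintro ⟨i, hii, rfl⟩
    have hpii : p i i := by
      rcases hii with h | ⟨h, _, _, _⟩ <;> exact h
    by_cases hiBB' : i ∈ B ∪ B'
    · left
      ext j
      constructor
      · rintro (hpij | ⟨_, _, _, hj⟩)
        · rcases hiBB' with hiB | hiB'
          · exact Or.inl ((block_eq_class hp hB hiB) ▸ hpij)
          · exact Or.inr ((block_eq_class hp hB' hiB') ▸ hpij)
        · exact hj
      · intro hj
        have hpjj : p j j := by
          rcases hj with hj | hj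
          · exact block_rel hp hB hj hj
          · exact block_rel hp hB' hj hj
        exact Or.inr ⟨hpii, hpjj, hiBB', hj⟩
    · right
      have hclass : {j | mergeRel p B B' i j} = {j | p i j} := by
        ext j
        constructor
        · rintro (h | ⟨_, _, hi, _⟩)
          · exact h
          · exact absurd hi hiBB'
        · exact fun h => Or.inl h
      rw [hclass]
      refine ⟨⟨i, hpii, rfl⟩, ?_, ?_⟩
      · intro h
        exact hiBB' (Or.inl (h ▸ (hpii : i ∈ {j | p i j})))
      · intro h
        exact hiBB' (Or.inr (h ▸ (hpii : i ∈ {j | p i j})))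
  · rintro (rfl | ⟨hC, hCB, hCB'⟩)
    · obtain ⟨i, hiB⟩ := block_nonempty hB
      have hpii : p i i := block_rel hp hB hiB hiB
      refine ⟨i, Or.inr ⟨hpii, hpii, Or.inl hiB, Or.inl hiB⟩, ?_⟩
      ext j
      constructor
      · intro hj
        have hpjj : p j j := by
          rcases hj with hj | hj
          · exact block_rel hp hB hj hj
          · exact block_rel hp hB' hj hj
        exact Or.inr ⟨hpii, hpjj, Or.inl hiB, hj⟩
      · rintro (hj | ⟨_, _, _, hj⟩)
        · exact Or.inl (rel_mem_block hp hB hiB hj)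
        · exact hj
    · obtain ⟨i, hiC⟩ := block_nonempty hC
      have hiB : i ∉ B := block_disjoint hp hC hB hCB hiC
      have hiB' : i ∉ B' := block_disjoint hp hC hB' hCB' hiC
      have hpii : p i i := block_rel hp hC hiC hiC
      refine ⟨i, Or.inl hpii, ?_⟩
      have hclass : {j | mergeRel p B B' i j} = {j | p i j} := by
        ext j
        constructor
        · rintro (h | ⟨_, _, hi, _⟩)
          · exact h
          · rcases hi with hi | hi
            · exact absurd hi hiB
            · exact absurd hi hiB'
        · exact fun h => Or.inl h
      rw [hclass]
      exact block_eq_class hp hC hiC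

lemma sInf_union_eq (hp : IsPartitionOn (Idx n) p) {B B' : Set ℕ}
    (hB : IsBlock p B) (hB' : IsBlock p B') (h : sInf B < sInf B') :
    sInf (B ∪ B') = sInf B := by
  apply le_antisymm
  · exact Nat.sInf_le (Or.inl (sInf_mem_block hB))
  · have hne : (B ∪ B').Nonempty := (block_nonempty hB).mono Set.subset_union_left
    rcases Nat.sInf_mem hne with hx | hx
    · exact Nat.sInf_le hx
    · exact le_trans (le_of_lt h) (Nat.sInf_le hx)

lemma sSup_union_eq (hp : IsPartitionOn (Idx n) p) {B B' : Set ℕ}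
    (hB : IsBlock p B) (hB' : IsBlock p B') (h : sSup B' < sSup B) :
    sSup (B ∪ B') = sSup B := by
  have hbdd : BddAbove (B ∪ B') := (block_bdd hp hB).union (block_bdd hp hB')
  apply le_antisymm
  · apply csSup_le ((block_nonempty hB).mono Set.subset_union_left)
    rintro x (hx | hx)
    · exact le_csSup (block_bdd hp hB) hx
    · exact le_trans (le_csSup (block_bdd hp hB') hx) (le_of_lt h)
  · exact le_csSup hbdd (Or.inl (sSup_mem_block hp hB))

end Aux

/-- merging an adjacent block `B'` of larger depth into `B`:
the merged block has depth `d_p(B)` in `p_{B,B'}`, and every other block of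
depth smaller than `d_p(B)` does not gain depth. -/
theorem depth_mergeRel
    (n : ℕ) (p : ℕ → ℕ → Prop)
    (hp : IsPartitionOn (Idx n) p) (hnc : NonCrossing p)
    (B B' : Set ℕ) (hadj : Adjacent p B B') (hd : depth p B < depth p B') :
    depth (mergeRel p B B') (B ∪ B') = depth p B ∧
    (∀ B'' : Set ℕ, IsBlock p B'' → B'' ≠ B → B'' ≠ B' →
      depth p B'' < depth p B → depth (mergeRel p B B') B'' ≤ depth p B'') := by
  classical
  obtain ⟨hkey1, hkey2⟩ := nested_key hp hnc hadj hd
  obtain ⟨hB, hB', hne, hmnc⟩ := hadj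
  have hiu : sInf (B ∪ B') = sInf B := sInf_union_eq hp hB hB' hkey1
  have hsu : sSup (B ∪ B') = sSup B := sSup_union_eq hp hB hB' hkey2
  have hblock : ∀ C : Set ℕ, IsBlock (mergeRel p B B') C ↔
      (C = B ∪ B' ∨ (IsBlock p C ∧ C ≠ B ∧ C ≠ B')) :=
    fun C => mergeRel_isBlock_iff hp hB hB' hne
  constructor
  · apply le_antisymm
    · -- depth q (B ∪ B') ≤ depth p B
      apply depth_le_of_subset
      rintro m ⟨c, hc1, hcb, hcn⟩
      refine ⟨fun i => if i = 1 then B else c i, if_pos rfl, ?_, ?_⟩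
      · intro i h1 h2
        by_cases hi : i = 1
        · simpa [hi] using hB
        · have hdec : sInf (c i) < sInf (c 1) := by
            have := chain_sInf hcn i h1 h2
            omega
          rw [hc1] at hdec
          rcases (hblock (c i)).mp (hcb i h1 h2) with h | ⟨h, _, _⟩
          · rw [h] at hdec; omega
          · simpa [hi] using h
      · intro i h1 h2
        by_cases hi : i = 1
        · subst hi
          have hnest := hcn 1 le_rfl h2
          rw [hc1] at hnest
          obtain ⟨hn1, hn2⟩ := hnest
          show Nested B (c (1 + 1))
          exact ⟨by omega, by omega⟩
        · have e : ∀ j : ℕ, j ≠ 1 →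
              (fun i => if i = 1 then B else c i) j = c j := fun j hj => if_neg hj
          rw [e i hi, e (i + 1) (by omega)]
          exact hcn i h1 h2
    · -- depth p B ≤ depth q (B ∪ B')
      apply depth_le_of_subset
      rintro m ⟨c, hc1, hcb, hcn⟩
      refine ⟨fun i => if i = 1 then B ∪ B' else c i, if_pos rfl, ?_, ?_⟩
      · intro i h1 h2
        by_cases hi : i = 1
        · simpa [hi] using (hblock (B ∪ B')).mpr (Or.inl rfl)
        · have hdec : sInf (c i) < sInf (c 1) := by
            have := chain_sInf hcn i h1 h2
            omega
          rw [hc1] at hdec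
          have hciB : c i ≠ B := by
            intro h; rw [h] at hdec; omega
          have hciB' : c i ≠ B' := by
            intro h; rw [h] at hdec; omega
          simpa [hi] using (hblock (c i)).mpr (Or.inr ⟨hcb i h1 h2, hciB, hciB'⟩)
      · intro i h1 h2
        by_cases hi : i = 1
        · subst hi
          have hnest := hcn 1 le_rfl h2
          rw [hc1] at hnest
          obtain ⟨hn1, hn2⟩ := hnest
          show Nested (B ∪ B') (c (1 + 1))
          exact ⟨by omega, by omega⟩
        · have e : ∀ j : ℕ, j ≠ 1 →
              (fun i => if i = 1 then B ∪ B' else c i) j = c j := fun j hj => if_neg hj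
          rw [e i hi, e (i + 1) (by omega)]
          exact hcn i h1 h2
  · intro B'' hB'' hne1 hne2 _
    obtain ⟨c, hc1, hcb, hcn⟩ := depth_mem_dSet (mergeRel p B B') B''
    have einf : ∀ j, sInf (if c j = B ∪ B' then B else c j) = sInf (c j) := by
      intro j
      split_ifs with h
      · rw [h, hiu]
      · rfl
    have esup : ∀ j, sSup (if c j = B ∪ B' then B else c j) = sSup (c j) := by
      intro j
      split_ifs with h
      · rw [h, hsu]
      · rfl
    refine le_depth (⟨fun i => if c i = B ∪ B' then B else c i, ?_, ?_, ?_⟩ :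
      depth (mergeRel p B B') B'' ∈ dSet p B'')
    · have hB''ne : B'' ≠ B ∪ B' := by
        intro h
        obtain ⟨x, hx⟩ := block_nonempty hB
        exact block_disjoint hp hB'' hB hne1 (by rw [h]; exact Or.inl hx) hx
      show (if c 1 = B ∪ B' then B else c 1) = B''
      rw [hc1, if_neg hB''ne]
    · intro i h1 h2
      by_cases hci : c i = B ∪ B'
      · simpa [hci] using hB
      · rcases (hblock (c i)).mp (hcb i h1 h2) with h | ⟨h, _, _⟩
        · exact absurd h hci
        · simpa [hci] using h
    · intro i h1 h2
      have hnest := hcn i h1 h2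
      show Nested (if c i = B ∪ B' then B else c i)
        (if c (i + 1) = B ∪ B' then B else c (i + 1))
      exact ⟨by rw [einf (i + 1), einf i]; exact hnest.1,
        by rw [esup i, esup (i + 1)]; exact hnest.2⟩

end NCPaper
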